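/- Assume (A1), (A2) and (A3). Then for any speed c ∈ ℝ, the constant function p ≡ 𝟙 is the unique bounded C² solution p : ℝ → ℝ^N of the traveling wave system −d_i p_i'' − c p_i' = (M p)_i + p_i − p_i (C p)_i (i = 1,…,N) satisfying min_{i∈{1,…,N}} inf_{ℝ} p_i > 0. -/

import Mathlib

open Matrix Filter
open scoped Topology

/-- Irreducibility of a matrix: there is no nonempty proper subset `S` of indices with
`M i j = 0` for all `i ∈ S`, `j ∉ S`. -/
def MatrixIrreducible {N : ℕ} (M : Matrix (Fin N) (Fin N) ℝ) : Prop :=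
  ∀ S : Finset (Fin N), S.Nonempty → S ≠ Finset.univ → ∃ i ∈ S, ∃ j ∉ S, M i j ≠ 0

section Aux

open scoped ComplexOrder

lemma conj_dot_aux {N : ℕ} (A : Matrix (Fin N) (Fin N) ℂ) (v : Fin N → ℂ) :
    star v ⬝ᵥ (Aᴴ *ᵥ v) = star (star v ⬝ᵥ (A *ᵥ v)) := by
  simp only [dotProduct, Matrix.mulVec, Matrix.conjTranspose_apply, star_sum, star_mul',
    star_star, Finset.mul_sum, Pi.star_apply]
  rw [Finset.sum_comm]
  refine Finset.sum_congr rfl fun i _ => Finset.sum_congr rfl fun j _ => by ring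

lemma psd_aux {N : ℕ} (C : Matrix (Fin N) (Fin N) ℝ)
    (hC_normal : C * Cᵀ = Cᵀ * C)
    (hC_spec : ∀ μ ∈ spectrum ℂ (C.map (algebraMap ℝ ℂ)), 0 ≤ μ.re)
    (x : Fin N → ℝ) : 0 ≤ ∑ i, ∑ j, x i * C i j * x j := by
  classical
  set Cc : Matrix (Fin N) (Fin N) ℂ := C.map (algebraMap ℝ ℂ) with hCc
  have hCcH : Ccᴴ = (Cᵀ).map (algebraMap ℝ ℂ) := by
    ext i j
    simp [Cc, Matrix.conjTranspose_apply, Matrix.map_apply, Complex.star_def,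
      Complex.conj_ofReal, Matrix.transpose_apply]
  have hnormal : Ccᴴ * Cc = Cc * Ccᴴ := by
    rw [hCcH, hCc, ← Matrix.map_mul, ← Matrix.map_mul, ← hC_normal]
  set S : Matrix (Fin N) (Fin N) ℂ := Cc + Ccᴴ with hSdef
  have hS : S.IsHermitian := by
    simp [Matrix.IsHermitian, hSdef, Matrix.conjTranspose_add, add_comm]
  have hcomm : S * Cc = Cc * S := by
    simp only [hSdef, Matrix.add_mul, Matrix.mul_add, hnormal]
  have heig : ∀ k, 0 ≤ hS.eigenvalues k := by
    intro k
    set μ : ℝ := hS.eigenvalues k with hμ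
    set w : Fin N → ℂ := ⇑(hS.eigenvectorBasis k) with hw
    have hweq : S *ᵥ w = (μ : ℂ) • w := by
      have h1 := hS.mulVec_eigenvectorBasis k
      have h2 : ((μ : ℂ) • w) = μ • w := by ext i; simp [Complex.real_smul]
      rw [h2]
      exact h1
    have hw0 : w ≠ 0 := by
      have h3 := hS.eigenvectorBasis.orthonormal.ne_zero k
      intro h
      apply h3
      ext i
      exact congrFun h i
    have hwE : w ∈ Module.End.eigenspace (Matrix.mulVecLin S) (μ : ℂ) := by
      rw [Module.End.mem_eigenspace_iff]
      simpa using hweq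
    have hEinv : ∀ v ∈ Module.End.eigenspace (Matrix.mulVecLin S) (μ : ℂ),
        Matrix.mulVecLin Cc v ∈ Module.End.eigenspace (Matrix.mulVecLin S) (μ : ℂ) := by
      intro v hv
      rw [Module.End.mem_eigenspace_iff] at hv ⊢
      simp only [Matrix.mulVecLin_apply] at hv ⊢
      rw [Matrix.mulVec_mulVec, hcomm, ← Matrix.mulVec_mulVec, hv, Matrix.mulVec_smul]
    set g := (Matrix.mulVecLin Cc).restrict hEinv with hg
    have : Nontrivial (Module.End.eigenspace (Matrix.mulVecLin S) (μ : ℂ)) := by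
      refine nontrivial_of_ne ⟨w, hwE⟩ 0 ?_
      simp [Subtype.ext_iff, hw0]
    obtain ⟨lam, hlam⟩ := Module.End.exists_eigenvalue g
    obtain ⟨v', hv'⟩ := hlam.exists_hasEigenvector
    set v : Fin N → ℂ := (v' : Fin N → ℂ) with hvdef
    have hv : Cc *ᵥ v = lam • v := by
      have h4 := hv'.apply_eq_smul
      have h5 := congrArg (Subtype.val) h4
      rw [LinearMap.restrict_apply] at h5
      simpa [Matrix.mulVecLin_apply] using h5
    have hvne : v ≠ 0 := fun h => hv'.2 (Submodule.coe_eq_zero.mp h)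
    have hvS : S *ᵥ v = (μ : ℂ) • v := by
      have h6 : (v' : Fin N → ℂ) ∈ Module.End.eigenspace (Matrix.mulVecLin S) (μ : ℂ) := v'.2
      rw [Module.End.mem_eigenspace_iff] at h6
      simpa [Matrix.mulVecLin_apply] using h6
    have hmem : lam ∈ spectrum ℂ Cc := by
      rw [spectrum.mem_iff]
      intro hunit
      rw [Matrix.isUnit_iff_isUnit_det] at hunit
      have hdet : (algebraMap ℂ (Matrix (Fin N) (Fin N) ℂ) lam - Cc).det = 0 := by
        rw [← Matrix.exists_mulVec_eq_zero_iff]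
        refine ⟨v, hvne, ?_⟩
        rw [Matrix.sub_mulVec, Algebra.algebraMap_eq_smul_one, Matrix.smul_mulVec,
          Matrix.one_mulVec, hv, sub_self]
      rw [hdet] at hunit
      exact not_isUnit_zero hunit
    have hre : 0 ≤ lam.re := hC_spec lam hmem
    have hn2 : star v ⬝ᵥ v ≠ 0 := fun h => hvne (dotProduct_star_self_eq_zero.mp h)
    have hself : star (star v ⬝ᵥ v) = star v ⬝ᵥ v := by
      simp only [dotProduct, star_sum, star_mul', Pi.star_apply, star_star]
      refine Finset.sum_congr rfl fun i _ => by ring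
    have e1 : star v ⬝ᵥ (Cc *ᵥ v) = lam * (star v ⬝ᵥ v) := by
      rw [hv, dotProduct_smul, smul_eq_mul]
    have e2 : star v ⬝ᵥ (Ccᴴ *ᵥ v) = star lam * (star v ⬝ᵥ v) := by
      rw [conj_dot_aux, e1, star_mul', hself]
    have e3 : (μ : ℂ) * (star v ⬝ᵥ v) = (lam + star lam) * (star v ⬝ᵥ v) := by
      have h7 : star v ⬝ᵥ (S *ᵥ v) = (μ : ℂ) * (star v ⬝ᵥ v) := by
        rw [hvS, dotProduct_smul, smul_eq_mul]
      rw [← h7, hSdef, Matrix.add_mulVec, dotProduct_add, e1, e2, add_mul]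
    have hμeq : (μ : ℂ) = lam + star lam := mul_right_cancel₀ hn2 e3
    rw [show star lam = (starRingEnd ℂ) lam from rfl, Complex.add_conj] at hμeq
    have h8 : μ = 2 * lam.re := by exact_mod_cast hμeq
    rw [h8]
    linarith
  have hpsd : S.PosSemidef := (Matrix.IsHermitian.posSemidef_iff_eigenvalues_nonneg hS).mpr heig
  set vx : Fin N → ℂ := fun i => (x i : ℂ) with hvx
  have h2 := hpsd.re_dotProduct_nonneg vx
  have hcomp : star vx ⬝ᵥ (S *ᵥ vx) = ((∑ i, ∑ j, x i * (C i j + C j i) * x j : ℝ) : ℂ) := by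
    simp only [hSdef, dotProduct, Matrix.mulVec, Matrix.add_apply, hCcH, hCc,
      Matrix.map_apply, Matrix.transpose_apply, hvx, Pi.star_apply, Complex.star_def,
      Complex.conj_ofReal]
    push_cast
    refine Finset.sum_congr rfl fun i _ => ?_
    rw [Finset.mul_sum]
    refine Finset.sum_congr rfl fun j _ => by
      simp only [Complex.coe_algebraMap, Matrix.conjTranspose_apply, Matrix.map_apply,
        Complex.star_def, Complex.conj_ofReal]; ring
  rw [hcomp] at h2
  simp only [RCLike.re_to_complex, Complex.ofReal_re] at h2
  have hswap : ∑ i, ∑ j, x i * C j i * x j = ∑ i, ∑ j, x i * C i j * x j := by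
    rw [Finset.sum_comm]
    refine Finset.sum_congr rfl fun i _ => Finset.sum_congr rfl fun j _ => by ring
  have hsplit : ∑ i, ∑ j, x i * (C i j + C j i) * x j = 2 * ∑ i, ∑ j, x i * C i j * x j := by
    calc ∑ i, ∑ j, x i * (C i j + C j i) * x j
        = ∑ i, ((∑ j, x i * C i j * x j) + ∑ j, x i * C j i * x j) := by
          refine Finset.sum_congr rfl fun i _ => ?_
          rw [← Finset.sum_add_distrib]
          refine Finset.sum_congr rfl fun j _ => by ring
      _ = (∑ i, ∑ j, x i * C i j * x j) + ∑ i, ∑ j, x i * C j i * x j :=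
          Finset.sum_add_distrib
      _ = 2 * ∑ i, ∑ j, x i * C i j * x j := by rw [hswap]; ring
  rw [hsplit] at h2
  linarith

end Aux

/-- The per-entry term in the entropy expansion. -/
noncomputable def qmT {N : ℕ} (M : Matrix (Fin N) (Fin N) ℝ) (x : Fin N → ℝ) (i j : Fin N) : ℝ :=
  M i j * (x j / x i - 1 - (Real.log (x j) - Real.log (x i)))

lemma qm_identity {N : ℕ} (M : Matrix (Fin N) (Fin N) ℝ)
    (hlss : ∀ i, ∑ j, M i j = ∑ j, M j i) (hrow : ∀ i, ∑ j, M i j = 0)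
    (x : Fin N → ℝ) (hx : ∀ i, 0 < x i) :
    ∑ i, ∑ j, qmT M x i j = -∑ i, (1 - (x i)⁻¹) * M.mulVec x i := by
  have hcol : ∀ j, ∑ i, M i j = 0 := by
    intro j; rw [← hlss j]; exact hrow j
  have z1 : ∑ i, ∑ j, M i j * x j = 0 := by
    rw [Finset.sum_comm]
    refine Finset.sum_eq_zero fun j _ => ?_
    rw [← Finset.sum_mul, hcol j, zero_mul]
  have z2 : ∑ i : Fin N, ∑ j, M i j = 0 := Finset.sum_eq_zero fun i _ => hrow i
  have z3 : ∑ i, ∑ j, M i j * Real.log (x j) = 0 := by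
    rw [Finset.sum_comm]
    refine Finset.sum_eq_zero fun j _ => ?_
    rw [← Finset.sum_mul, hcol j, zero_mul]
  have z4 : ∑ i, ∑ j, M i j * Real.log (x i) = 0 := by
    refine Finset.sum_eq_zero fun i _ => ?_
    rw [← Finset.sum_mul, hrow i, zero_mul]
  have expand : ∑ i, (1 - (x i)⁻¹) * M.mulVec x i
      = ∑ i, ∑ j, (M i j * x j - M i j * (x j / x i)) := by
    refine Finset.sum_congr rfl fun i _ => ?_
    simp only [Matrix.mulVec, dotProduct]
    rw [Finset.mul_sum]
    refine Finset.sum_congr rfl fun j _ => ?_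
    field_simp
  have expand2 : ∑ i, ∑ j, qmT M x i j
      = ∑ i, ∑ j, (M i j * (x j / x i) - M i j - M i j * Real.log (x j)
          + M i j * Real.log (x i)) := by
    refine Finset.sum_congr rfl fun i _ => Finset.sum_congr rfl fun j _ => ?_
    simp only [qmT]; ring
  rw [expand, expand2]
  have l1 : ∑ i, ∑ j, (M i j * (x j / x i) - M i j - M i j * Real.log (x j)
      + M i j * Real.log (x i)) = ∑ i, ∑ j, M i j * (x j / x i) := by
    simp only [Finset.sum_add_distrib, Finset.sum_sub_distrib, z2, z3, z4]
    ring
  have l2 : ∑ i, ∑ j, (M i j * x j - M i j * (x j / x i))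
      = -∑ i, ∑ j, M i j * (x j / x i) := by
    simp only [Finset.sum_sub_distrib, z1]
    ring
  rw [l1, l2, neg_neg]

lemma qmT_nonneg {N : ℕ} (M : Matrix (Fin N) (Fin N) ℝ)
    (hoff : ∀ i j, i ≠ j → 0 ≤ M i j) (x : Fin N → ℝ) (hx : ∀ i, 0 < x i)
    (i j : Fin N) : 0 ≤ qmT M x i j := by
  rcases eq_or_ne i j with rfl | hij
  · simp [qmT, div_self (hx i).ne']
  · have hfac : 0 ≤ x j / x i - 1 - (Real.log (x j) - Real.log (x i)) := by
      have hx' : x j / x i = Real.exp (Real.log (x j) - Real.log (x i)) := by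
        rw [Real.exp_sub, Real.exp_log (hx j), Real.exp_log (hx i)]
      rw [hx']
      have := Real.add_one_le_exp (Real.log (x j) - Real.log (x i))
      linarith
    exact mul_nonneg (hoff i j hij) hfac

lemma qmT_eq_zero_rigid {N : ℕ} (M : Matrix (Fin N) (Fin N) ℝ)
    (hoff : ∀ i j, i ≠ j → 0 ≤ M i j) (hirr : MatrixIrreducible M)
    (x : Fin N → ℝ) (hx : ∀ i, 0 < x i)
    (hzero : ∀ i j, qmT M x i j = 0) : ∀ i j, x i = x j := by
  have key : ∀ i j, i ≠ j → M i j ≠ 0 → x i = x j := by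
    intro i j hij hM
    have h0 := hzero i j
    have hMpos : 0 < M i j := lt_of_le_of_ne (hoff i j hij) (Ne.symm hM)
    have hfac : x j / x i - 1 - (Real.log (x j) - Real.log (x i)) = 0 := by
      by_contra h
      exact h (by
        have := mul_eq_zero.mp h0
        tauto)
    set s := Real.log (x j) - Real.log (x i) with hs
    have hx' : x j / x i = Real.exp s := by
      rw [hs, Real.exp_sub, Real.exp_log (hx j), Real.exp_log (hx i)]
    rw [hx'] at hfac
    have hs0 : s = 0 := by
      by_contra hsne
      have := Real.add_one_lt_exp hsne
      linarith
    have hlog : Real.log (x i) = Real.log (x j) := by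
      have : Real.log (x j) - Real.log (x i) = 0 := hs ▸ hs0
      linarith
    have := congrArg Real.exp hlog
    rwa [Real.exp_log (hx i), Real.exp_log (hx j)] at this
  intro i0 j0
  classical
  set S : Finset (Fin N) := Finset.univ.filter (fun j => x j = x i0) with hS
  have hi0 : i0 ∈ S := by simp [hS]
  have hSuniv : S = Finset.univ := by
    by_contra hne
    obtain ⟨i, hiS, j, hjS, hMij⟩ := hirr S ⟨i0, hi0⟩ hne
    have hxi : x i = x i0 := by simpa [hS] using hiS
    have hxj : x j ≠ x i0 := by simpa [hS] using hjS
    have hij : i ≠ j := fun h => hxj (h ▸ hxi)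
    have := key i j hij hMij
    exact hxj (this ▸ hxi)
  have hj0 : j0 ∈ S := hSuniv ▸ Finset.mem_univ j0
  have : x j0 = x i0 := by simpa [hS] using hj0
  exact this.symm

/-- The nonnegative "entropy production" functional. -/
noncomputable def Qfun {N : ℕ} (M C : Matrix (Fin N) (Fin N) ℝ) (x : Fin N → ℝ) : ℝ :=
  (∑ i, ∑ j, qmT M x i j) + ∑ i, ∑ j, (x i - 1) * C i j * (x j - 1)

lemma Q_zero_rigid {N : ℕ} (M C : Matrix (Fin N) (Fin N) ℝ) (hN : 2 ≤ N)
    (hoff : ∀ i j, i ≠ j → 0 ≤ M i j)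
    (hirr : MatrixIrreducible M)
    (hC_normal : C * Cᵀ = Cᵀ * C)
    (hC_spec : ∀ μ ∈ spectrum ℂ (C.map (algebraMap ℝ ℂ)), 0 ≤ μ.re)
    (hC_row : ∀ i, ∑ j, C i j = 1)
    (x : Fin N → ℝ) (hx : ∀ i, 0 < x i)
    (hQ : Qfun M C x = 0) :
    ∀ i, x i = 1 := by
  rw [Qfun] at hQ
  have h1 : 0 ≤ ∑ i, ∑ j, qmT M x i j :=
    Finset.sum_nonneg fun i _ => Finset.sum_nonneg fun j _ => qmT_nonneg M hoff x hx i j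
  have h2 : 0 ≤ ∑ i, ∑ j, (x i - 1) * C i j * (x j - 1) :=
    psd_aux C hC_normal hC_spec (fun i => x i - 1)
  have hz1 : ∑ i, ∑ j, qmT M x i j = 0 := by linarith
  have hz2 : ∑ i, ∑ j, (x i - 1) * C i j * (x j - 1) = 0 := by linarith
  have hterm : ∀ i j, qmT M x i j = 0 := by
    intro i j
    have houter := (Finset.sum_eq_zero_iff_of_nonneg
      (fun i _ => Finset.sum_nonneg fun j _ => qmT_nonneg M hoff x hx i j)).mp hz1 i
      (Finset.mem_univ i)
    exact (Finset.sum_eq_zero_iff_of_nonneg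
      (fun j _ => qmT_nonneg M hoff x hx i j)).mp houter j (Finset.mem_univ j)
  have hconst := qmT_eq_zero_rigid M hoff hirr x hx hterm
  have hNpos : 0 < N := by omega
  set i0 : Fin N := ⟨0, hNpos⟩ with hi0
  set α : ℝ := x i0 with hα
  have hxi : ∀ i, x i = α := fun i => hconst i i0
  have hz2' : (α - 1) ^ 2 * (N : ℝ) = 0 := by
    have hsum : ∑ i, ∑ j, (x i - 1) * C i j * (x j - 1) = (α - 1) ^ 2 * (N : ℝ) := by
      have hinner : ∀ i : Fin N, ∑ j, (x i - 1) * C i j * (x j - 1) = (α - 1) ^ 2 := by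
        intro i
        have : ∑ j, (x i - 1) * C i j * (x j - 1) = (α - 1) ^ 2 * ∑ j, C i j := by
          rw [Finset.mul_sum]
          refine Finset.sum_congr rfl fun j _ => ?_
          rw [hxi i, hxi j]; ring
        rw [this, hC_row i, mul_one]
      rw [Finset.sum_congr rfl fun i _ => hinner i]
      simp [Finset.card_univ]
      ring
    linarith [hsum ▸ hz2]
  have hα1 : α = 1 := by
    have hN0 : (N : ℝ) ≠ 0 := by positivity
    rcases mul_eq_zero.mp hz2' with h | h
    · have := pow_eq_zero_iff (n := 2) (by norm_num) |>.mp h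
      linarith
    · exact absurd h hN0
  intro i; rw [hxi i, hα1]

lemma cterm_identity {N : ℕ} (C : Matrix (Fin N) (Fin N) ℝ)
    (hC_row : ∀ i, ∑ j, C i j = 1) (x : Fin N → ℝ) (hx : ∀ i, 0 < x i) :
    ∑ i, (1 - (x i)⁻¹) * (x i - x i * C.mulVec x i)
      = -∑ i, ∑ j, (x i - 1) * C i j * (x j - 1) := by
  have hinner : ∀ i, (1 - (x i)⁻¹) * (x i - x i * C.mulVec x i)
      = -∑ j, ((x i - 1) * C i j * (x j - 1)) := by
    intro i
    have hxt : (1 - (x i)⁻¹) * x i = x i - 1 := by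
      have hne := (hx i).ne'
      field_simp
    have h1 : (1 - (x i)⁻¹) * (x i - x i * C.mulVec x i)
        = (x i - 1) * (1 - C.mulVec x i) := by
      calc (1 - (x i)⁻¹) * (x i - x i * C.mulVec x i)
          = ((1 - (x i)⁻¹) * x i) * (1 - C.mulVec x i) := by ring
        _ = (x i - 1) * (1 - C.mulVec x i) := by rw [hxt]
    have h2 : 1 - C.mulVec x i = -∑ j, C i j * (x j - 1) := by
      have e : ∑ j, C i j * (x j - 1) = (∑ j, C i j * x j) - ∑ j, C i j := by
        rw [← Finset.sum_sub_distrib]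
        exact Finset.sum_congr rfl fun j _ => by ring
      simp only [Matrix.mulVec, dotProduct]
      rw [e, hC_row i]
      ring
    rw [h1, h2, mul_neg, Finset.mul_sum]
    congr 1
    exact Finset.sum_congr rfl fun j _ => by ring
  rw [Finset.sum_congr rfl fun i _ => hinner i]
  exact Finset.sum_neg_distrib _

lemma deriv_bound_aux {f : ℝ → ℝ} (hf : ContDiff ℝ 2 f) {B K a : ℝ} (hB : ∀ x, |f x| ≤ B)
    (hf'' : ∀ x, |deriv (deriv f) x| ≤ a * |deriv f x| + K) (ha : 0 ≤ a) (hK : 0 ≤ K) :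
    ∃ V : ℝ, ∀ x, |deriv f x| ≤ V := by
  have hdf : Differentiable ℝ f := hf.differentiable two_ne_zero
  have hdf1 : Differentiable ℝ (deriv f) := by
    have h := (contDiff_succ_iff_deriv (n := 1)).mp (by norm_num at hf ⊢; exact hf)
    exact h.2.2.differentiable one_ne_zero
  have hcont1 : Continuous (deriv f) := hdf1.continuous
  have hB0 : 0 ≤ B := le_trans (abs_nonneg _) (hB 0)
  set h : ℝ := min 1 (1 / (2 * a + 1)) with hh
  have hhpos : 0 < h := lt_min one_pos (by positivity)
  have hha : h * a ≤ 1 / 2 := by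
    have h1 : h ≤ 1 / (2 * a + 1) := min_le_right _ _
    have h2 : 0 < 2 * a + 1 := by linarith
    have h4 : (1 / (2 * a + 1)) * (2 * a + 1) = 1 := one_div_mul_cancel (ne_of_gt h2)
    have h5 : (0:ℝ) ≤ 1 / (2 * a + 1) := by positivity
    nlinarith [mul_le_mul_of_nonneg_right h1 ha]
  refine ⟨2 * (2 * B / h + h * K), fun x => ?_⟩
  obtain ⟨y, hyI, hymax⟩ := isCompact_Icc.exists_isMaxOn (s := Set.Icc x (x + h))
    (Set.nonempty_Icc.mpr (by linarith)) ((continuous_abs.comp hcont1).continuousOn)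
  set W : ℝ := |deriv f y| with hW
  have hWnn : 0 ≤ W := abs_nonneg _
  obtain ⟨ζ, hζI, hζ⟩ := exists_deriv_eq_slope f (by linarith : x < x + h)
    (hdf.continuous.continuousOn) (hdf.differentiableOn)
  have hζI' : ζ ∈ Set.Icc x (x + h) := Set.mem_Icc_of_Ioo hζI
  have hζbound : |deriv f ζ| ≤ 2 * B / h := by
    have hxx : x + h - x = h := by ring
    rw [hζ, hxx, abs_div, abs_of_pos hhpos]
    have hnum : |f (x + h) - f x| ≤ 2 * B := by
      calc |f (x + h) - f x| ≤ |f (x + h)| + |f x| := abs_sub _ _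
        _ ≤ 2 * B := by linarith [hB (x + h), hB x]
    gcongr
  have hWb : W ≤ 2 * B / h + h * (a * W + K) := by
    have hdiff : |deriv f y - deriv f ζ| ≤ h * (a * W + K) := by
      rcases lt_trichotomy ζ y with hlt | heq | hgt
      · obtain ⟨η, hηI, hη⟩ := exists_deriv_eq_slope (deriv f) hlt
          (hcont1.continuousOn) (hdf1.differentiableOn)
        have hηI' : η ∈ Set.Icc x (x + h) := by
          constructor
          · linarith [hηI.1, hζI'.1]
          · linarith [hηI.2, hyI.2]
        have hWη : |deriv f η| ≤ W := hymax hηI'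
        have hbd : |deriv (deriv f) η| ≤ a * W + K := by
          calc |deriv (deriv f) η| ≤ a * |deriv f η| + K := hf'' η
            _ ≤ a * W + K := by nlinarith
        have hne : y - ζ ≠ 0 := sub_ne_zero_of_ne (ne_of_gt hlt)
        rw [eq_div_iff hne] at hη
        have heq2 : deriv f y - deriv f ζ = deriv (deriv f) η * (y - ζ) := hη.symm
        rw [heq2, abs_mul]
        have hyζ : |y - ζ| ≤ h := by
          rw [abs_of_pos (by linarith)]
          linarith [hyI.2, hζI'.1]
        calc |deriv (deriv f) η| * |y - ζ| ≤ (a * W + K) * h := by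
              apply mul_le_mul hbd hyζ (abs_nonneg _) (by positivity)
          _ = h * (a * W + K) := by ring
      · rw [heq]
        simp only [sub_self, abs_zero]
        have : (0:ℝ) ≤ a * W + K := by nlinarith
        nlinarith
      · obtain ⟨η, hηI, hη⟩ := exists_deriv_eq_slope (deriv f) hgt
          (hcont1.continuousOn) (hdf1.differentiableOn)
        have hηI' : η ∈ Set.Icc x (x + h) := by
          constructor
          · linarith [hηI.1, hyI.1]
          · linarith [hηI.2, hζI'.2]
        have hWη : |deriv f η| ≤ W := hymax hηI'
        have hbd : |deriv (deriv f) η| ≤ a * W + K := by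
          calc |deriv (deriv f) η| ≤ a * |deriv f η| + K := hf'' η
            _ ≤ a * W + K := by nlinarith
        have hne : ζ - y ≠ 0 := sub_ne_zero_of_ne (ne_of_gt hgt)
        rw [eq_div_iff hne] at hη
        have : deriv f y - deriv f ζ = deriv (deriv f) η * (y - ζ) := by nlinarith [hη]
        rw [this, abs_mul]
        have hyζ : |y - ζ| ≤ h := by
          rw [abs_of_neg (by linarith)]
          have := hyI.1; have := hζI'.2
          linarith
        calc |deriv (deriv f) η| * |y - ζ| ≤ (a * W + K) * h :=
              mul_le_mul hbd hyζ (abs_nonneg _) (by positivity)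
          _ = h * (a * W + K) := by ring
    calc W = |deriv f y| := rfl
      _ ≤ |deriv f ζ| + |deriv f y - deriv f ζ| := by
          have := abs_sub_abs_le_abs_sub (deriv f y) (deriv f ζ)
          linarith [abs_nonneg (deriv f y - deriv f ζ)]
      _ ≤ 2 * B / h + h * (a * W + K) := by linarith [hζbound]
  have hWfinal : W ≤ 2 * (2 * B / h + h * K) := by nlinarith [hha, hWnn, hhpos]
  calc |deriv f x| ≤ W := hymax (Set.left_mem_Icc.mpr (by linarith))
    _ ≤ 2 * (2 * B / h + h * K) := hWfinal

/-- The Lyapunov dissipation functional. -/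
noncomputable def Phif {N : ℕ} (M C : Matrix (Fin N) (Fin N) ℝ) (d : Fin N → ℝ)
    (p : ℝ → Fin N → ℝ) (ξ : ℝ) : ℝ :=
  (∑ i, d i * (deriv (fun x => p x i) ξ) ^ 2 / (p ξ i) ^ 2) + Qfun M C (p ξ)

/-- The Lyapunov functional. -/
noncomputable def Gfun {N : ℕ} (d : Fin N → ℝ) (c : ℝ) (p : ℝ → Fin N → ℝ) (ξ : ℝ) : ℝ :=
  ∑ i, (-(d i) * ((1 - (p ξ i)⁻¹) * deriv (fun x => p x i) ξ)
    - c * (p ξ i - Real.log (p ξ i)))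

theorem stmt0 {N : ℕ} (hN : 2 ≤ N)
    (M C : Matrix (Fin N) (Fin N) ℝ) (d : Fin N → ℝ) (hd : ∀ i, 0 < d i)
    -- (A1)
    (hM_offdiag : ∀ i j, i ≠ j → 0 ≤ M i j)
    (hM_irr : MatrixIrreducible M)
    (hM_lss : ∀ i, ∑ j, M i j = ∑ j, M j i)
    (hM_row : ∀ i, ∑ j, M i j = 0)
    -- (A2)
    (hC_pos : ∀ i j, 0 < C i j)
    (hC_normal : C * Cᵀ = Cᵀ * C)
    (hC_row : ∀ i, ∑ j, C i j = 1)
    -- (A3)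
    (hC_spec : ∀ μ ∈ spectrum ℂ (C.map (algebraMap ℝ ℂ)), 0 ≤ μ.re)
    (c : ℝ) (p : ℝ → Fin N → ℝ)
    (hp_C2 : ∀ i, ContDiff ℝ 2 (fun ξ => p ξ i))
    (hp_bdd : ∃ B : ℝ, ∀ ξ i, |p ξ i| ≤ B)
    (hp_inf : ∃ m > 0, ∀ ξ i, m ≤ p ξ i)
    (hp_eq : ∀ ξ i,
      -(d i) * deriv (deriv (fun x => p x i)) ξ - c * deriv (fun x => p x i) ξ
        = M.mulVec (p ξ) i + p ξ i - p ξ i * C.mulVec (p ξ) i) :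
    ∀ ξ i, p ξ i = 1 := by
  classical
  obtain ⟨B, hB⟩ := hp_bdd
  obtain ⟨m, hm, hmle⟩ := hp_inf
  have hNpos : 0 < N := by omega
  have hppos : ∀ ξ i, 0 < p ξ i := fun ξ i => lt_of_lt_of_le hm (hmle ξ i)
  have hpB : ∀ ξ i, p ξ i ≤ B := fun ξ i => (le_abs_self _).trans (hB ξ i)
  have hmB : m ≤ B := (hmle 0 ⟨0, hNpos⟩).trans (hpB 0 ⟨0, hNpos⟩)
  have hBpos : 0 < B := lt_of_lt_of_le hm hmB
  -- differentiability
  have hdiff : ∀ i, Differentiable ℝ (fun ξ => p ξ i) :=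
    fun i => (hp_C2 i).differentiable two_ne_zero
  have hdiff1 : ∀ i, Differentiable ℝ (deriv (fun x => p x i)) := by
    intro i
    have hf := hp_C2 i
    have h := (contDiff_succ_iff_deriv (n := 1)).mp (by norm_num at hf ⊢; exact hf)
    exact h.2.2.differentiable one_ne_zero
  -- bound on the reaction terms
  set Kb : Fin N → ℝ := fun i => (∑ j, |M i j|) * B + B + B * ((∑ j, |C i j|) * B) with hKbdef
  have hKbnn : ∀ i, 0 ≤ Kb i := by
    intro i
    have h1 : (0:ℝ) ≤ ∑ j, |M i j| := Finset.sum_nonneg fun j _ => abs_nonneg _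
    have h2 : (0:ℝ) ≤ ∑ j, |C i j| := Finset.sum_nonneg fun j _ => abs_nonneg _
    have := hBpos.le
    simp only [hKbdef]
    positivity
  have hRb : ∀ ξ i, |M.mulVec (p ξ) i + p ξ i - p ξ i * C.mulVec (p ξ) i| ≤ Kb i := by
    intro ξ i
    have h1 : |M.mulVec (p ξ) i| ≤ (∑ j, |M i j|) * B := by
      simp only [Matrix.mulVec, dotProduct]
      calc |∑ j, M i j * p ξ j| ≤ ∑ j, |M i j * p ξ j| := Finset.abs_sum_le_sum_abs _ _
        _ ≤ ∑ j, |M i j| * B := Finset.sum_le_sum fun j _ => by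
            rw [abs_mul]
            exact mul_le_mul_of_nonneg_left (hB ξ j) (abs_nonneg _)
        _ = (∑ j, |M i j|) * B := by rw [Finset.sum_mul]
    have h2 : |C.mulVec (p ξ) i| ≤ (∑ j, |C i j|) * B := by
      simp only [Matrix.mulVec, dotProduct]
      calc |∑ j, C i j * p ξ j| ≤ ∑ j, |C i j * p ξ j| := Finset.abs_sum_le_sum_abs _ _
        _ ≤ ∑ j, |C i j| * B := Finset.sum_le_sum fun j _ => by
            rw [abs_mul]
            exact mul_le_mul_of_nonneg_left (hB ξ j) (abs_nonneg _)
        _ = (∑ j, |C i j|) * B := by rw [Finset.sum_mul]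
    have h3 : |p ξ i * C.mulVec (p ξ) i| ≤ B * ((∑ j, |C i j|) * B) := by
      rw [abs_mul]
      exact mul_le_mul (hB ξ i) h2 (abs_nonneg _) hBpos.le
    calc |M.mulVec (p ξ) i + p ξ i - p ξ i * C.mulVec (p ξ) i|
        ≤ |M.mulVec (p ξ) i + p ξ i| + |p ξ i * C.mulVec (p ξ) i| := abs_sub _ _
      _ ≤ (|M.mulVec (p ξ) i| + |p ξ i|) + |p ξ i * C.mulVec (p ξ) i| := by
          linarith [abs_add_le (M.mulVec (p ξ) i) (p ξ i)]
      _ ≤ Kb i := by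
          simp only [hKbdef]
          linarith [hB ξ i]
  -- formula and bound for the second derivative
  have hp2eq : ∀ i ξ, deriv (deriv (fun x => p x i)) ξ
      = (-(c * deriv (fun x => p x i) ξ)
        - (M.mulVec (p ξ) i + p ξ i - p ξ i * C.mulVec (p ξ) i)) / d i := by
    intro i ξ
    rw [eq_div_iff (hd i).ne']
    linarith [hp_eq ξ i]
  have hf'' : ∀ i ξ, |deriv (deriv (fun x => p x i)) ξ|
      ≤ (|c| / d i) * |deriv (fun x => p x i) ξ| + Kb i / d i := by
    intro i ξ
    rw [hp2eq i ξ, abs_div, abs_of_pos (hd i)]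
    have hnum : |(-(c * deriv (fun x => p x i) ξ)
        - (M.mulVec (p ξ) i + p ξ i - p ξ i * C.mulVec (p ξ) i))|
        ≤ |c| * |deriv (fun x => p x i) ξ| + Kb i := by
      calc |(-(c * deriv (fun x => p x i) ξ)
          - (M.mulVec (p ξ) i + p ξ i - p ξ i * C.mulVec (p ξ) i))|
          ≤ |(-(c * deriv (fun x => p x i) ξ))|
            + |M.mulVec (p ξ) i + p ξ i - p ξ i * C.mulVec (p ξ) i| := abs_sub _ _
        _ ≤ |c| * |deriv (fun x => p x i) ξ| + Kb i := by
            rw [abs_neg, abs_mul]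
            linarith [hRb ξ i]
    calc |(-(c * deriv (fun x => p x i) ξ)
        - (M.mulVec (p ξ) i + p ξ i - p ξ i * C.mulVec (p ξ) i))| / d i
        ≤ (|c| * |deriv (fun x => p x i) ξ| + Kb i) / d i := by
          gcongr
          exact (hd i).le
      _ = (|c| / d i) * |deriv (fun x => p x i) ξ| + Kb i / d i := by ring
  -- uniform bound for the first derivatives
  have hVex : ∀ i, ∃ V : ℝ, ∀ ξ, |deriv (fun x => p x i) ξ| ≤ V := by
    intro i
    exact deriv_bound_aux (hp_C2 i) (fun ξ => hB ξ i) (hf'' i)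
      (div_nonneg (abs_nonneg c) (hd i).le) (div_nonneg (hKbnn i) (hd i).le)
  choose V hVle using hVex
  have hVnn : ∀ i, 0 ≤ V i := fun i => le_trans (abs_nonneg _) (hVle i 0)
  -- nonnegativity of Φ and Q along the solution
  have hQf_nonneg : ∀ x : Fin N → ℝ, (∀ i, 0 < x i) → 0 ≤ Qfun M C x := by
    intro x hx
    exact add_nonneg
      (Finset.sum_nonneg fun i _ => Finset.sum_nonneg fun j _ => qmT_nonneg M hM_offdiag x hx i j)
      (psd_aux C hC_normal hC_spec (fun i => x i - 1))
  have hsum_nonneg : ∀ ξ, 0 ≤ ∑ i, d i * (deriv (fun x => p x i) ξ) ^ 2 / (p ξ i) ^ 2 := by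
    intro ξ
    refine Finset.sum_nonneg fun i _ => ?_
    exact div_nonneg (mul_nonneg (hd i).le (sq_nonneg _)) (sq_nonneg _)
  have hΦ_nonneg : ∀ ξ, 0 ≤ Phif M C d p ξ := by
    intro ξ
    exact add_nonneg (hsum_nonneg ξ) (hQf_nonneg (p ξ) (hppos ξ))
  -- the key derivative computation
  have hGd : ∀ ξ, HasDerivAt (Gfun d c p) (-Phif M C d p ξ) ξ := by
    intro ξ
    have hterm : ∀ i : Fin N, HasDerivAt
        (fun θ => -(d i) * ((1 - (p θ i)⁻¹) * deriv (fun x => p x i) θ)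
          - c * (p θ i - Real.log (p θ i)))
        (-(d i) * ((0 - -deriv (fun x => p x i) ξ / p ξ i ^ 2) * deriv (fun x => p x i) ξ
            + (1 - (p ξ i)⁻¹) * deriv (deriv (fun x => p x i)) ξ)
          - c * (deriv (fun x => p x i) ξ
            - deriv (fun x => p x i) ξ / p ξ i)) ξ := by
      intro i
      have h_p : HasDerivAt (fun θ => p θ i) (deriv (fun x => p x i) ξ) ξ :=
        ((hdiff i) ξ).hasDerivAt
      have h_inv : HasDerivAt (fun θ => (p θ i)⁻¹)
          (-deriv (fun x => p x i) ξ / p ξ i ^ 2) ξ := h_p.inv (hppos ξ i).ne'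
      have h_1inv := (hasDerivAt_const ξ (1:ℝ)).sub h_inv
      have h_p1 : HasDerivAt (fun θ => deriv (fun x => p x i) θ)
          (deriv (deriv (fun x => p x i)) ξ) ξ := ((hdiff1 i) ξ).hasDerivAt
      have h_mul := h_1inv.mul h_p1
      have h_log : HasDerivAt (fun θ => Real.log (p θ i))
          (deriv (fun x => p x i) ξ / p ξ i) ξ := h_p.log (hppos ξ i).ne'
      have h_sub := h_p.sub h_log
      exact (h_mul.const_mul (-(d i))).sub (h_sub.const_mul c)
    have hsum := HasDerivAt.fun_sum (fun i (_ : i ∈ Finset.univ) => hterm i)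
    have hval : (∑ i : Fin N,
        (-(d i) * ((0 - -deriv (fun x => p x i) ξ / p ξ i ^ 2) * deriv (fun x => p x i) ξ
            + (1 - (p ξ i)⁻¹) * deriv (deriv (fun x => p x i)) ξ)
          - c * (deriv (fun x => p x i) ξ - deriv (fun x => p x i) ξ / p ξ i)))
        = -Phif M C d p ξ := by
      have hper : ∀ i : Fin N,
          (-(d i) * ((0 - -deriv (fun x => p x i) ξ / p ξ i ^ 2) * deriv (fun x => p x i) ξ
            + (1 - (p ξ i)⁻¹) * deriv (deriv (fun x => p x i)) ξ)
          - c * (deriv (fun x => p x i) ξ - deriv (fun x => p x i) ξ / p ξ i))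
          = -(d i * (deriv (fun x => p x i) ξ) ^ 2 / (p ξ i) ^ 2)
            + (1 - (p ξ i)⁻¹)
              * (M.mulVec (p ξ) i + p ξ i - p ξ i * C.mulVec (p ξ) i) := by
        intro i
        rw [← hp_eq ξ i]
        have hne := (hppos ξ i).ne'
        field_simp
        ring
      rw [Finset.sum_congr rfl fun i _ => hper i, Finset.sum_add_distrib]
      have e1 := qm_identity M hM_lss hM_row (p ξ) (hppos ξ)
      have e2 := cterm_identity C hC_row (p ξ) (hppos ξ)
      have hsplitR : ∑ i, (1 - (p ξ i)⁻¹)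
            * (M.mulVec (p ξ) i + p ξ i - p ξ i * C.mulVec (p ξ) i)
          = (∑ i, (1 - (p ξ i)⁻¹) * M.mulVec (p ξ) i)
            + ∑ i, (1 - (p ξ i)⁻¹) * (p ξ i - p ξ i * C.mulVec (p ξ) i) := by
        rw [← Finset.sum_add_distrib]
        exact Finset.sum_congr rfl fun i _ => by ring
      rw [hsplitR]
      have hneg : ∑ i : Fin N, -(d i * (deriv (fun x => p x i) ξ) ^ 2 / (p ξ i) ^ 2)
          = -∑ i, d i * (deriv (fun x => p x i) ξ) ^ 2 / (p ξ i) ^ 2 :=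
        Finset.sum_neg_distrib _
      rw [hneg]
      simp only [Phif, Qfun]
      linarith [e1, e2]
    rw [← hval]
    exact hsum
  have hGdiff : Differentiable ℝ (Gfun d c p) := fun ξ => (hGd ξ).differentiableAt
  have hGderiv : ∀ ξ, deriv (Gfun d c p) ξ = -Phif M C d p ξ := fun ξ => (hGd ξ).deriv
  have hGanti : Antitone (Gfun d c p) := by
    apply antitone_of_deriv_nonpos hGdiff
    intro ξ
    rw [hGderiv]
    linarith [hΦ_nonneg ξ]
  -- boundedness of G
  set Lg : ℝ := |Real.log m| + |Real.log B| with hLgdef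
  have hlogb : ∀ ξ i, |Real.log (p ξ i)| ≤ Lg := by
    intro ξ i
    have h1 : Real.log m ≤ Real.log (p ξ i) := Real.log_le_log hm (hmle ξ i)
    have h2 : Real.log (p ξ i) ≤ Real.log B :=
      Real.log_le_log (hppos ξ i) (hpB ξ i)
    rw [abs_le]
    constructor
    · have := neg_abs_le (Real.log m)
      have := abs_nonneg (Real.log B)
      simp only [hLgdef]
      linarith
    · have := le_abs_self (Real.log B)
      have := abs_nonneg (Real.log m)
      simp only [hLgdef]
      linarith
  set GB : ℝ := ∑ i, (d i * ((1 + m⁻¹) * V i) + |c| * (B + Lg)) with hGBdef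
  have hGbound : ∀ ξ, |Gfun d c p ξ| ≤ GB := by
    intro ξ
    simp only [Gfun]
    refine (Finset.abs_sum_le_sum_abs _ _).trans (Finset.sum_le_sum fun i _ => ?_)
    have h1inv : |1 - (p ξ i)⁻¹| ≤ 1 + m⁻¹ := by
      have hi1 : 0 < (p ξ i)⁻¹ := inv_pos.mpr (hppos ξ i)
      have hi2 : (p ξ i)⁻¹ ≤ m⁻¹ := by
        apply inv_anti₀ hm (hmle ξ i)
      rw [abs_le]
      constructor <;> [skip; skip] <;> nlinarith [inv_pos.mpr hm]
    have e1 : |(1 - (p ξ i)⁻¹) * deriv (fun x => p x i) ξ| ≤ (1 + m⁻¹) * V i := by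
      rw [abs_mul]
      apply mul_le_mul h1inv (hVle i ξ) (abs_nonneg _)
      have := inv_pos.mpr hm
      linarith
    have e2 : |p ξ i - Real.log (p ξ i)| ≤ B + Lg := by
      calc |p ξ i - Real.log (p ξ i)| ≤ |p ξ i| + |Real.log (p ξ i)| := abs_sub _ _
        _ ≤ B + Lg := add_le_add (hB ξ i) (hlogb ξ i)
    calc |(-(d i) * ((1 - (p ξ i)⁻¹) * deriv (fun x => p x i) ξ)
          - c * (p ξ i - Real.log (p ξ i)))|
        ≤ |(-(d i)) * ((1 - (p ξ i)⁻¹) * deriv (fun x => p x i) ξ)|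
          + |c * (p ξ i - Real.log (p ξ i))| := abs_sub _ _
      _ = d i * |(1 - (p ξ i)⁻¹) * deriv (fun x => p x i) ξ|
          + |c| * |p ξ i - Real.log (p ξ i)| := by
          simp only [abs_mul, abs_neg, abs_of_pos (hd i)]
      _ ≤ d i * ((1 + m⁻¹) * V i) + |c| * (B + Lg) := by
          rw [abs_mul] at e1
          have h3 := mul_le_mul_of_nonneg_left e1 (hd i).le
          have h4 := mul_le_mul_of_nonneg_left e2 (abs_nonneg c)
          simp only [abs_mul] at h3 ⊢
          exact add_le_add h3 h4
  have hGBnn : 0 ≤ GB := le_trans (abs_nonneg _) (hGbound 0)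
  have hGbdd_below : BddBelow (Set.range (Gfun d c p)) := by
    refine ⟨-GB, fun yv hyv => ?_⟩
    obtain ⟨ξ, rfl⟩ := hyv
    linarith [neg_abs_le (Gfun d c p ξ), hGbound ξ]
  have hGbdd_above : BddAbove (Set.range (Gfun d c p)) := by
    refine ⟨GB, fun yv hyv => ?_⟩
    obtain ⟨ξ, rfl⟩ := hyv
    linarith [le_abs_self (Gfun d c p ξ), hGbound ξ]
  have hLP : Tendsto (Gfun d c p) atTop (𝓝 (⨅ ξ, Gfun d c p ξ)) :=
    tendsto_atTop_ciInf hGanti hGbdd_below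
  have hLM : Tendsto (Gfun d c p) atBot (𝓝 (⨆ ξ, Gfun d c p ξ)) :=
    tendsto_atBot_ciSup hGanti hGbdd_above
  -- existence of points with small dissipation arbitrarily far right/left
  have hclaim1 : ∀ ε > (0:ℝ), ∀ T : ℝ, ∃ ξ, T ≤ ξ ∧ Phif M C d p ξ < ε := by
    intro ε hε T
    by_contra hcon
    push_neg at hcon
    have hd2 : ∀ θ, HasDerivAt (fun ξ => Gfun d c p ξ + ε * ξ) (-Phif M C d p θ + ε) θ := by
      intro θ
      have h := (hGd θ).add ((hasDerivAt_id θ).const_mul ε)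
      exact (by simpa using h : HasDerivAt (Gfun d c p + fun y => ε * y) _ θ)
    have hanti2 : AntitoneOn (fun ξ => Gfun d c p ξ + ε * ξ) (Set.Ici T) := by
      apply antitoneOn_of_deriv_nonpos (convex_Ici T)
      · exact (hGdiff.continuous.add (continuous_const.mul continuous_id)).continuousOn
      · intro θ _
        exact ((hd2 θ).differentiableAt).differentiableWithinAt
      · intro θ hθ
        rw [interior_Ici] at hθ
        rw [(hd2 θ).deriv]
        have := hcon θ (le_of_lt hθ)
        linarith
    set ξ0 : ℝ := max T ((Gfun d c p T + ε * T + GB) / ε + 1) with hξ0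
    have hT0 : T ≤ ξ0 := le_max_left _ _
    have h0 : (Gfun d c p T + ε * T + GB) / ε + 1 ≤ ξ0 := le_max_right _ _
    have h1 : Gfun d c p ξ0 + ε * ξ0 ≤ Gfun d c p T + ε * T :=
      hanti2 (Set.left_mem_Icc.mp ⟨le_refl T, le_refl T⟩ : T ∈ Set.Ici T) hT0 hT0
    have h2 : -GB ≤ Gfun d c p ξ0 := by linarith [neg_abs_le (Gfun d c p ξ0), hGbound ξ0]
    have h3 : Gfun d c p T + ε * T + GB < ξ0 * ε :=
      (div_lt_iff₀ hε).mp (lt_of_lt_of_le (lt_add_one _) h0)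
    nlinarith [h1, h2, h3]
  have hclaim2 : ∀ ε > (0:ℝ), ∀ T : ℝ, ∃ ξ, ξ ≤ T ∧ Phif M C d p ξ < ε := by
    intro ε hε T
    by_contra hcon
    push_neg at hcon
    have hd2 : ∀ θ, HasDerivAt (fun ξ => Gfun d c p ξ + ε * ξ) (-Phif M C d p θ + ε) θ := by
      intro θ
      have h := (hGd θ).add ((hasDerivAt_id θ).const_mul ε)
      exact (by simpa using h : HasDerivAt (Gfun d c p + fun y => ε * y) _ θ)
    have hanti2 : AntitoneOn (fun ξ => Gfun d c p ξ + ε * ξ) (Set.Iic T) := by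
      apply antitoneOn_of_deriv_nonpos (convex_Iic T)
      · exact (hGdiff.continuous.add (continuous_const.mul continuous_id)).continuousOn
      · intro θ _
        exact ((hd2 θ).differentiableAt).differentiableWithinAt
      · intro θ hθ
        rw [interior_Iic] at hθ
        rw [(hd2 θ).deriv]
        have := hcon θ (le_of_lt hθ)
        linarith
    set ξ0 : ℝ := min T (T - (2 * GB / ε + 1)) with hξ0
    have hT0 : ξ0 ≤ T := min_le_left _ _
    have h0 : ξ0 ≤ T - (2 * GB / ε + 1) := min_le_right _ _
    have h1 : Gfun d c p T + ε * T ≤ Gfun d c p ξ0 + ε * ξ0 :=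
      hanti2 hT0 (le_refl T : T ∈ Set.Iic T) hT0
    have h2 : Gfun d c p ξ0 ≤ GB := by linarith [le_abs_self (Gfun d c p ξ0), hGbound ξ0]
    have h3 : -GB ≤ Gfun d c p T := by linarith [neg_abs_le (Gfun d c p T), hGbound T]
    have h4 : 2 * GB / ε + 1 ≤ T - ξ0 := by linarith
    have h5 : 2 * GB < (T - ξ0) * ε := by
      have := (div_lt_iff₀ hε).mp (lt_of_lt_of_le (lt_add_one (2 * GB / ε)) h4)
      linarith
    nlinarith [h1, h2, h3, h5]
  -- key limit identification along sequences with vanishing dissipation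
  have hkey : ∀ ξs : ℕ → ℝ, Tendsto (fun n => Phif M C d p (ξs n)) atTop (𝓝 0) →
      ∀ L : ℝ, Tendsto (fun n => Gfun d c p (ξs n)) atTop (𝓝 L) →
      L = ∑ _i : Fin N, -c := by
    intro ξs hΦ0 L hGL
    have hp1seq : ∀ i, Tendsto (fun n => deriv (fun x => p x i) (ξs n)) atTop (𝓝 0) := by
      intro i
      have hbound : ∀ n, ‖deriv (fun x => p x i) (ξs n)‖
          ≤ Real.sqrt ((Phif M C d p (ξs n) * B ^ 2) / d i) := by
        intro n
        have hterm : d i * (deriv (fun x => p x i) (ξs n)) ^ 2 / (p (ξs n) i) ^ 2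
            ≤ Phif M C d p (ξs n) := by
          have h1 : d i * (deriv (fun x => p x i) (ξs n)) ^ 2 / (p (ξs n) i) ^ 2
              ≤ ∑ k, d k * (deriv (fun x => p x k) (ξs n)) ^ 2 / (p (ξs n) k) ^ 2 :=
            Finset.single_le_sum
              (f := fun k => d k * (deriv (fun x => p x k) (ξs n)) ^ 2 / (p (ξs n) k) ^ 2)
              (fun k _ => div_nonneg (mul_nonneg (hd k).le (sq_nonneg _)) (sq_nonneg _))
              (Finset.mem_univ i)
          have h2 := hQf_nonneg (p (ξs n)) (hppos _)
          simp only [Phif]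
          linarith
        have hp2pos : (0:ℝ) < (p (ξs n) i) ^ 2 := pow_pos (hppos _ i) 2
        rw [div_le_iff₀ hp2pos] at hterm
        have hp2B : (p (ξs n) i) ^ 2 ≤ B ^ 2 :=
          pow_le_pow_left₀ (hppos _ i).le (hpB _ i) 2
        have h3 : d i * (deriv (fun x => p x i) (ξs n)) ^ 2
            ≤ Phif M C d p (ξs n) * B ^ 2 := by
          calc d i * (deriv (fun x => p x i) (ξs n)) ^ 2
              ≤ Phif M C d p (ξs n) * (p (ξs n) i) ^ 2 := hterm
            _ ≤ Phif M C d p (ξs n) * B ^ 2 :=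
              mul_le_mul_of_nonneg_left hp2B (hΦ_nonneg _)
        have h4 : (deriv (fun x => p x i) (ξs n)) ^ 2
            ≤ (Phif M C d p (ξs n) * B ^ 2) / d i := by
          rw [le_div_iff₀ (hd i)]
          linarith
        calc ‖deriv (fun x => p x i) (ξs n)‖
            = Real.sqrt ((deriv (fun x => p x i) (ξs n)) ^ 2) :=
            (Real.sqrt_sq_eq_abs _).symm
          _ ≤ Real.sqrt ((Phif M C d p (ξs n) * B ^ 2) / d i) := Real.sqrt_le_sqrt h4
      have hlim : Tendsto (fun n => Real.sqrt ((Phif M C d p (ξs n) * B ^ 2) / d i))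
          atTop (𝓝 0) := by
        have h1 : Tendsto (fun n => (Phif M C d p (ξs n) * B ^ 2) / d i) atTop (𝓝 0) := by
          have := (hΦ0.mul_const (B ^ 2)).div_const (d i)
          simpa using this
        have := h1.sqrt
        simpa using this
      exact squeeze_zero_norm hbound hlim
    have hQ0 : Tendsto (fun n => Qfun M C (p (ξs n))) atTop (𝓝 0) := by
      refine squeeze_zero (fun n => hQf_nonneg _ (hppos _)) (fun n => ?_) hΦ0
      have := hsum_nonneg (ξs n)
      simp only [Phif]
      linarith
    obtain ⟨y, hyK, φ, hφ, hconv⟩ :=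
      (isCompact_univ_pi fun _ : Fin N => isCompact_Icc (a := m) (b := B)).tendsto_subseq
        (x := fun n => p (ξs n))
        (fun n => Set.mem_univ_pi.mpr fun i => ⟨hmle _ i, hpB _ i⟩)
    have hyc : ∀ i, Tendsto (fun k => p (ξs (φ k)) i) atTop (𝓝 (y i)) := by
      intro i
      exact (tendsto_pi_nhds.mp hconv) i
    have hym : ∀ i, m ≤ y i := fun i => (Set.mem_univ_pi.mp hyK i).1
    have hypos : ∀ i, 0 < y i := fun i => lt_of_lt_of_le hm (hym i)
    have hQyt : Tendsto (fun k => Qfun M C (p (ξs (φ k)))) atTop (𝓝 (Qfun M C y)) := by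
      simp only [Qfun]
      apply Tendsto.add
      · apply tendsto_finset_sum
        intro i _
        apply tendsto_finset_sum
        intro j _
        simp only [qmT]
        have h1 : Tendsto (fun k => p (ξs (φ k)) j / p (ξs (φ k)) i) atTop
            (𝓝 (y j / y i)) := (hyc j).div (hyc i) (hypos i).ne'
        have h2 := (hyc j).log (hypos j).ne'
        have h3 := (hyc i).log (hypos i).ne'
        exact ((h1.sub tendsto_const_nhds).sub (h2.sub h3)).const_mul (M i j)
      · apply tendsto_finset_sum
        intro i _
        apply tendsto_finset_sum
        intro j _
        exact (((hyc i).sub tendsto_const_nhds).mul_const (C i j)).mul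
          ((hyc j).sub tendsto_const_nhds)
    have hQy0 : Qfun M C y = 0 :=
      tendsto_nhds_unique hQyt (hQ0.comp hφ.tendsto_atTop)
    have hy1 : ∀ i, y i = 1 :=
      Q_zero_rigid M C hN hM_offdiag hM_irr hC_normal hC_spec hC_row y hypos hQy0
    have hGsub : Tendsto (fun k => Gfun d c p (ξs (φ k))) atTop
        (𝓝 (∑ _i : Fin N, -c)) := by
      simp only [Gfun]
      apply tendsto_finset_sum
      intro i _
      have hyc1 : Tendsto (fun k => p (ξs (φ k)) i) atTop (𝓝 1) := by
        rw [← hy1 i]; exact hyc i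
      have hp1t : Tendsto (fun k => deriv (fun x => p x i) (ξs (φ k))) atTop (𝓝 0) :=
        (hp1seq i).comp hφ.tendsto_atTop
      have hA : Tendsto (fun k => -(d i) * ((1 - (p (ξs (φ k)) i)⁻¹)
          * deriv (fun x => p x i) (ξs (φ k)))) atTop
          (𝓝 (-(d i) * ((1 - (1:ℝ)⁻¹) * 0))) :=
        ((tendsto_const_nhds.sub (hyc1.inv₀ one_ne_zero)).mul hp1t).const_mul (-(d i))
      have hB2 : Tendsto (fun k => c * (p (ξs (φ k)) i - Real.log (p (ξs (φ k)) i))) atTop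
          (𝓝 (c * (1 - Real.log 1))) :=
        (hyc1.sub (hyc1.log one_ne_zero)).const_mul c
      have h := hA.sub hB2
      simpa [Real.log_one] using h
    exact tendsto_nhds_unique (hGL.comp hφ.tendsto_atTop) hGsub
  -- construct the sequences
  have hseqP : ∀ n : ℕ, ∃ ξ, (n:ℝ) ≤ ξ ∧ Phif M C d p ξ < 1 / ((n:ℝ) + 1) :=
    fun n => hclaim1 (1 / ((n:ℝ) + 1)) (by positivity) n
  choose ξp hξp1 hξp2 using hseqP
  have hξpTop : Tendsto ξp atTop atTop :=
    tendsto_atTop_mono hξp1 tendsto_natCast_atTop_atTop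
  have hΦp0 : Tendsto (fun n => Phif M C d p (ξp n)) atTop (𝓝 0) :=
    squeeze_zero (fun n => hΦ_nonneg _) (fun n => (hξp2 n).le)
      tendsto_one_div_add_atTop_nhds_zero_nat
  have hseqM : ∀ n : ℕ, ∃ ξ, ξ ≤ -(n:ℝ) ∧ Phif M C d p ξ < 1 / ((n:ℝ) + 1) :=
    fun n => hclaim2 (1 / ((n:ℝ) + 1)) (by positivity) (-(n:ℝ))
  choose ξm hξm1 hξm2 using hseqM
  have hξmBot : Tendsto ξm atTop atBot :=
    tendsto_atBot_mono hξm1 (tendsto_neg_atTop_atBot.comp tendsto_natCast_atTop_atTop)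
  have hΦm0 : Tendsto (fun n => Phif M C d p (ξm n)) atTop (𝓝 0) :=
    squeeze_zero (fun n => hΦ_nonneg _) (fun n => (hξm2 n).le)
      tendsto_one_div_add_atTop_nhds_zero_nat
  have hinf_eq : (⨅ ξ, Gfun d c p ξ) = ∑ _i : Fin N, -c :=
    hkey ξp hΦp0 _ (hLP.comp hξpTop)
  have hsup_eq : (⨆ ξ, Gfun d c p ξ) = ∑ _i : Fin N, -c :=
    hkey ξm hΦm0 _ (hLM.comp hξmBot)
  have hGconst : ∀ ξ, Gfun d c p ξ = ∑ _i : Fin N, -c := by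
    intro ξ
    have h1 : (⨅ ξ, Gfun d c p ξ) ≤ Gfun d c p ξ := ciInf_le hGbdd_below ξ
    have h2 : Gfun d c p ξ ≤ ⨆ ξ, Gfun d c p ξ := le_ciSup hGbdd_above ξ
    rw [hinf_eq] at h1
    rw [hsup_eq] at h2
    linarith
  have hΦzero : ∀ ξ, Phif M C d p ξ = 0 := by
    intro ξ
    have hG0 : deriv (Gfun d c p) ξ = 0 := by
      have hfun : Gfun d c p = fun _ => ∑ _i : Fin N, -c := funext hGconst
      rw [hfun]
      exact deriv_const ξ _
    rw [hGderiv ξ] at hG0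
    linarith
  intro ξ i
  have hQz : Qfun M C (p ξ) = 0 := by
    have h := hΦzero ξ
    simp only [Phif] at h
    have := hsum_nonneg ξ
    have := hQf_nonneg (p ξ) (hppos ξ)
    linarith
  exact Q_zero_rigid M C hN hM_offdiag hM_irr hC_normal hC_spec hC_row (p ξ) (hppos ξ) hQz i
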